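/- Let μ and ν be probability measures on a product space X × Y with μ absolutely continuous with respect to ν. Then the KL divergence decomposes as D_KL(μ | ν) = D_KL(μ_X | ν_X) + ∫_X D_KL(μ(·|x) | ν(·|x)) dμ_X(x), where μ_X, ν_X are the marginals on X and μ(·|x), ν(·|x) are the conditional (disintegration) kernels. -/

import Mathlib

open MeasureTheory ProbabilityTheory
open scoped ENNReal NNReal Classical

/-- Kullback–Leibler divergence `D_KL(μ | ν) = ∫ log(dμ/dν) dμ` when `μ ≪ ν` (and the
integrand is integrable), and `+∞` otherwise. -/

noncomputable def klDiv {α : Type*} [MeasurableSpace α] (μ ν : Measure α) : ℝ≥0∞ :=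
  if μ ≪ ν ∧ Integrable (fun x => Real.log (μ.rnDeriv ν x).toReal) μ
  then ENNReal.ofReal (∫ x, Real.log (μ.rnDeriv ν x).toReal ∂μ)
  else ⊤

section Aux

variable {α : Type*} [MeasurableSpace α]

lemma aux_ae_pos_lt_top (μ ν : Measure α) [SigmaFinite μ] [SigmaFinite ν] (hac : μ ≪ ν) :
    ∀ᵐ a ∂μ, 0 < μ.rnDeriv ν a ∧ μ.rnDeriv ν a < ⊤ := by
  filter_upwards [Measure.rnDeriv_pos hac, hac.ae_le (Measure.rnDeriv_lt_top μ ν)] with a h1 h2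
  exact ⟨h1, h2⟩

lemma aux_neg_le_one (μ ν : Measure α) [IsProbabilityMeasure μ] [IsProbabilityMeasure ν]
    (hac : μ ≪ ν) :
    ∫⁻ a, ENNReal.ofReal (-Real.log (μ.rnDeriv ν a).toReal) ∂μ ≤ 1 := by
  have h1 : ∫⁻ a, ENNReal.ofReal (-Real.log (μ.rnDeriv ν a).toReal) ∂μ
      ≤ ∫⁻ a, (μ.rnDeriv ν a)⁻¹ ∂μ := by
    refine lintegral_mono_ae ?_
    filter_upwards [aux_ae_pos_lt_top μ ν hac] with a ⟨h0, htop⟩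
    have ht : 0 < (μ.rnDeriv ν a).toReal := ENNReal.toReal_pos h0.ne' htop.ne
    have : -Real.log (μ.rnDeriv ν a).toReal ≤ (μ.rnDeriv ν a).toReal⁻¹ := by
      have := Real.log_le_sub_one_of_pos (inv_pos.mpr ht)
      rw [Real.log_inv] at this
      linarith
    calc ENNReal.ofReal (-Real.log (μ.rnDeriv ν a).toReal)
        ≤ ENNReal.ofReal (μ.rnDeriv ν a).toReal⁻¹ := ENNReal.ofReal_le_ofReal this
      _ = (μ.rnDeriv ν a)⁻¹ := by
          rw [← ENNReal.toReal_inv, ENNReal.ofReal_toReal (by simp [h0.ne'])]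
  refine h1.trans ?_
  rw [← lintegral_rnDeriv_mul hac (f := fun a => (μ.rnDeriv ν a)⁻¹) (Measure.measurable_rnDeriv μ ν).inv.aemeasurable]
  calc ∫⁻ a, μ.rnDeriv ν a * (μ.rnDeriv ν a)⁻¹ ∂ν ≤ ∫⁻ _, 1 ∂ν := by
        refine lintegral_mono fun a => ?_
        rcases eq_or_ne (μ.rnDeriv ν a) 0 with h | h
        · simp [h]
        rcases eq_or_ne (μ.rnDeriv ν a) ⊤ with h' | h'
        · simp [h']
        · rw [ENNReal.mul_inv_cancel h h']
    _ = 1 := by simp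

lemma aux_inv_lintegral_le (μ ν : Measure α) [IsProbabilityMeasure μ] [IsProbabilityMeasure ν]
    (hac : μ ≪ ν) :
    ∫⁻ a, ENNReal.ofReal ((μ.rnDeriv ν a).toReal⁻¹) ∂μ ≤ 1 := by
  have h1 : ∫⁻ a, ENNReal.ofReal ((μ.rnDeriv ν a).toReal⁻¹) ∂μ
      ≤ ∫⁻ a, (μ.rnDeriv ν a)⁻¹ ∂μ := by
    refine lintegral_mono_ae ?_
    filter_upwards [aux_ae_pos_lt_top μ ν hac] with a ⟨h0, htop⟩
    rw [← ENNReal.toReal_inv, ENNReal.ofReal_toReal (by simp [h0.ne'])]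
  refine h1.trans ?_
  rw [← lintegral_rnDeriv_mul hac (f := fun a => (μ.rnDeriv ν a)⁻¹) (Measure.measurable_rnDeriv μ ν).inv.aemeasurable]
  calc ∫⁻ a, μ.rnDeriv ν a * (μ.rnDeriv ν a)⁻¹ ∂ν ≤ ∫⁻ _, 1 ∂ν := by
        refine lintegral_mono fun a => ?_
        rcases eq_or_ne (μ.rnDeriv ν a) 0 with h | h
        · simp [h]
        rcases eq_or_ne (μ.rnDeriv ν a) ⊤ with h' | h'
        · simp [h']
        · rw [ENNReal.mul_inv_cancel h h']
    _ = 1 := by simp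

lemma aux_meas_llr (μ ν : Measure α) :
    Measurable (fun a => Real.log (μ.rnDeriv ν a).toReal) :=
  (Measure.measurable_rnDeriv μ ν).ennreal_toReal.log

/-- Integrability is equivalent to finiteness of the positive part. -/
lemma aux_integrable_iff (μ ν : Measure α) [IsProbabilityMeasure μ] [IsProbabilityMeasure ν]
    (hac : μ ≪ ν) :
    Integrable (fun a => Real.log (μ.rnDeriv ν a).toReal) μ
      ↔ ∫⁻ a, ENNReal.ofReal (Real.log (μ.rnDeriv ν a).toReal) ∂μ ≠ ⊤ := by
  have hmeas := aux_meas_llr μ ν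
  constructor
  · intro h
    have := h.2
    rw [hasFiniteIntegral_iff_norm] at this
    refine ne_top_of_le_ne_top this.ne (lintegral_mono fun a => ?_)
    exact ENNReal.ofReal_le_ofReal (le_abs_self _)
  · intro h
    refine ⟨hmeas.aestronglyMeasurable, ?_⟩
    rw [hasFiniteIntegral_iff_norm]
    have habs : ∀ a : α, ENNReal.ofReal ‖Real.log (μ.rnDeriv ν a).toReal‖
        = ENNReal.ofReal (Real.log (μ.rnDeriv ν a).toReal)
          + ENNReal.ofReal (-Real.log (μ.rnDeriv ν a).toReal) := by
      intro a
      set t := Real.log (μ.rnDeriv ν a).toReal with ht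
      rcases le_total 0 t with h' | h'
      · rw [Real.norm_eq_abs, abs_of_nonneg h',
          ENNReal.ofReal_of_nonpos (neg_nonpos.mpr h'), add_zero]
      · rw [Real.norm_eq_abs, abs_of_nonpos h', ENNReal.ofReal_of_nonpos h', zero_add]
    simp_rw [habs]
    rw [lintegral_add_left (hmeas.ennreal_ofReal)]
    exact ENNReal.add_lt_top.mpr ⟨lt_top_iff_ne_top.mpr h,
      (aux_neg_le_one μ ν hac).trans_lt ENNReal.one_lt_top⟩

/-- Gibbs: nonnegativity of the integral when integrable. -/
lemma aux_integral_nonneg (μ ν : Measure α) [IsProbabilityMeasure μ] [IsProbabilityMeasure ν]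
    (hac : μ ≪ ν) (h : Integrable (fun a => Real.log (μ.rnDeriv ν a).toReal) μ) :
    0 ≤ ∫ a, Real.log (μ.rnDeriv ν a).toReal ∂μ := by
  set I : α → ℝ := fun a => (μ.rnDeriv ν a).toReal⁻¹ with hI
  have hImeas : Measurable I := (Measure.measurable_rnDeriv μ ν).ennreal_toReal.inv
  have hInonneg : ∀ a, 0 ≤ I a := fun a => inv_nonneg.mpr ENNReal.toReal_nonneg
  have hIint : Integrable I μ := by
    refine ⟨hImeas.aestronglyMeasurable, ?_⟩
    rw [hasFiniteIntegral_iff_norm]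
    have : ∀ a, ENNReal.ofReal ‖I a‖ = ENNReal.ofReal (I a) := fun a => by
      rw [Real.norm_eq_abs, abs_of_nonneg (hInonneg a)]
    simp_rw [this]
    exact (aux_inv_lintegral_le μ ν hac).trans_lt ENNReal.one_lt_top
  have hIle : ∫ a, I a ∂μ ≤ 1 := by
    rw [integral_eq_lintegral_of_nonneg_ae (Filter.Eventually.of_forall hInonneg)
      hImeas.aestronglyMeasurable]
    calc (∫⁻ a, ENNReal.ofReal (I a) ∂μ).toReal ≤ (1 : ℝ≥0∞).toReal :=
      ENNReal.toReal_mono (by simp) (aux_inv_lintegral_le μ ν hac)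
    _ = 1 := by simp
  have hlb : ∀ᵐ a ∂μ, 1 - I a ≤ Real.log (μ.rnDeriv ν a).toReal := by
    filter_upwards [aux_ae_pos_lt_top μ ν hac] with a ⟨h0, htop⟩
    have ht : 0 < (μ.rnDeriv ν a).toReal := ENNReal.toReal_pos h0.ne' htop.ne
    have := Real.log_le_sub_one_of_pos (inv_pos.mpr ht)
    rw [Real.log_inv] at this
    simp only [hI]
    linarith
  have : ∫ a, (1 - I a) ∂μ ≤ ∫ a, Real.log (μ.rnDeriv ν a).toReal ∂μ :=
    integral_mono_ae ((integrable_const 1).sub hIint) h hlb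
  rw [integral_sub (integrable_const 1) hIint] at this
  simp only [integral_const, measure_univ, ENNReal.toReal_one, probReal_univ, smul_eq_mul, one_mul] at this
  linarith

/-- The negative part is dominated by the positive part. -/
lemma aux_neg_le_pos (μ ν : Measure α) [IsProbabilityMeasure μ] [IsProbabilityMeasure ν]
    (hac : μ ≪ ν) :
    ∫⁻ a, ENNReal.ofReal (-Real.log (μ.rnDeriv ν a).toReal) ∂μ
      ≤ ∫⁻ a, ENNReal.ofReal (Real.log (μ.rnDeriv ν a).toReal) ∂μ := by
  set A := ∫⁻ a, ENNReal.ofReal (Real.log (μ.rnDeriv ν a).toReal) ∂μ with hA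
  set A' := ∫⁻ a, ENNReal.ofReal (-Real.log (μ.rnDeriv ν a).toReal) ∂μ with hA'
  have hA'fin : A' ≠ ⊤ := ((aux_neg_le_one μ ν hac).trans_lt ENNReal.one_lt_top).ne
  rcases eq_or_ne A ⊤ with hAtop | hAfin
  · exact hAtop ▸ le_top
  have hint : Integrable (fun a => Real.log (μ.rnDeriv ν a).toReal) μ :=
    (aux_integrable_iff μ ν hac).mpr hAfin
  have h0 := aux_integral_nonneg μ ν hac hint
  rw [integral_eq_lintegral_pos_part_sub_lintegral_neg_part hint] at h0
  have : A'.toReal ≤ A.toReal := by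
    simp only [← hA, ← hA'] at h0
    linarith
  exact (ENNReal.toReal_le_toReal hA'fin hAfin).mp this

lemma klDiv_eq_sub (μ ν : Measure α) [IsProbabilityMeasure μ] [IsProbabilityMeasure ν]
    (hac : μ ≪ ν) :
    klDiv μ ν = (∫⁻ a, ENNReal.ofReal (Real.log (μ.rnDeriv ν a).toReal) ∂μ)
      - (∫⁻ a, ENNReal.ofReal (-Real.log (μ.rnDeriv ν a).toReal) ∂μ) := by
  set A := ∫⁻ a, ENNReal.ofReal (Real.log (μ.rnDeriv ν a).toReal) ∂μ with hA
  set A' := ∫⁻ a, ENNReal.ofReal (-Real.log (μ.rnDeriv ν a).toReal) ∂μ with hA'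
  have hA'fin : A' ≠ ⊤ := ((aux_neg_le_one μ ν hac).trans_lt ENNReal.one_lt_top).ne
  rcases eq_or_ne A ⊤ with hAtop | hAfin
  · rw [klDiv, if_neg, hAtop, ENNReal.top_sub hA'fin]
    rintro ⟨-, hint⟩
    exact ((aux_integrable_iff μ ν hac).mp hint) hAtop
  · have hint : Integrable (fun a => Real.log (μ.rnDeriv ν a).toReal) μ :=
      (aux_integrable_iff μ ν hac).mpr hAfin
    rw [klDiv, if_pos ⟨hac, hint⟩]
    have heq := integral_eq_lintegral_pos_part_sub_lintegral_neg_part hint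
    rw [heq]
    rw [ENNReal.ofReal_sub _ ENNReal.toReal_nonneg, ENNReal.ofReal_toReal hAfin,
      ENNReal.ofReal_toReal hA'fin]

/-- Pointwise identity used to split the log of a product. -/
lemma aux_ofReal_add_identity (a b : ℝ) :
    ENNReal.ofReal (a + b) + (ENNReal.ofReal (-a) + ENNReal.ofReal (-b))
      = ENNReal.ofReal (-(a + b)) + (ENNReal.ofReal a + ENNReal.ofReal b) := by
  rw [ENNReal.ofReal, ENNReal.ofReal, ENNReal.ofReal, ENNReal.ofReal, ENNReal.ofReal,
    ENNReal.ofReal, ← ENNReal.coe_add, ← ENNReal.coe_add, ← ENNReal.coe_add, ← ENNReal.coe_add,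
    ENNReal.coe_inj]
  apply NNReal.coe_injective
  push_cast [Real.coe_toNNReal']
  simp only [max_def]
  split_ifs <;> linarith

lemma aux_sub_eq_sub {a a' b b' : ℝ≥0∞} (h : a + b' = a' + b) (ha' : a' ≠ ⊤) (hb' : b' ≠ ⊤)
    (h1 : a' ≤ a) (h2 : b' ≤ b) : a - a' = b - b' := by
  have key : (a - a') + (a' + b') = (b - b') + (a' + b') := by
    rw [← add_assoc, tsub_add_cancel_of_le h1, h, add_comm a' b', ← add_assoc,
      tsub_add_cancel_of_le h2, add_comm b a']
  exact WithTop.add_right_cancel (ENNReal.add_ne_top.mpr ⟨ha', hb'⟩) key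

lemma aux_sub_add_sub {b b' c c' : ℝ≥0∞} (hb' : b' ≠ ⊤) (hc' : c' ≠ ⊤)
    (h1 : b' ≤ b) (h2 : c' ≤ c) : (b + c) - (b' + c') = (b - b') + (c - c') := by
  have key : ((b + c) - (b' + c')) + (b' + c') = ((b - b') + (c - c')) + (b' + c') := by
    rw [tsub_add_cancel_of_le (add_le_add h1 h2)]
    calc b + c = ((b - b') + b') + ((c - c') + c') := by
          rw [tsub_add_cancel_of_le h1, tsub_add_cancel_of_le h2]
      _ = ((b - b') + (c - c')) + (b' + c') := by ring
  exact WithTop.add_right_cancel (ENNReal.add_ne_top.mpr ⟨hb', hc'⟩) key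

end Aux

/-- **Chain rule (disintegration) for KL divergence.** For probability measures `μ ≪ ν` on a
product of standard Borel spaces, `D_KL(μ | ν)` is the KL divergence of the `X`-marginals plus
the `μ_X`-average of the KL divergences of the conditional (disintegration) kernels. -/
theorem kl_div_chain_rule
    {X Y : Type*} [MeasurableSpace X] [StandardBorelSpace X]
    [MeasurableSpace Y] [StandardBorelSpace Y] [Nonempty Y]
    (μ ν : Measure (X × Y)) [IsProbabilityMeasure μ] [IsProbabilityMeasure ν]
    (hac : μ ≪ ν) :
    klDiv μ ν
      = klDiv μ.fst ν.fst
        + ∫⁻ x, klDiv (μ.condKernel x) (ν.condKernel x) ∂μ.fst := by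
  -- Notation
  set f : X × Y → ℝ≥0∞ := μ.rnDeriv ν with hf_def
  have hf_meas : Measurable f := Measure.measurable_rnDeriv μ ν
  have hμν : ν.withDensity f = μ := Measure.withDensity_rnDeriv_eq μ ν hac
  have hν_eq : ν.fst ⊗ₘ ν.condKernel = ν := ν.disintegrate ν.condKernel
  have hμ_eq : μ.fst ⊗ₘ μ.condKernel = μ := μ.disintegrate μ.condKernel
  have hfst_ac : μ.fst ≪ ν.fst := hac.map measurable_fst
  set g : X → ℝ≥0∞ := fun x => ∫⁻ y, f (x, y) ∂ν.condKernel x with hg_def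
  have hg_meas : Measurable g := Measurable.lintegral_kernel_prod_right' hf_meas
  -- slice formula for integrals against ν
  have hsliceint : ∀ (s : Set (X × Y)), MeasurableSet s →
      ∫⁻ z in s, f z ∂ν = ∫⁻ x, ∫⁻ y in Prod.mk x ⁻¹' s, f (x, y) ∂ν.condKernel x ∂ν.fst := by
    intro s hs
    have h1 : ∫⁻ z in s, f z ∂(ν.fst ⊗ₘ ν.condKernel)
        = ∫⁻ x, ∫⁻ y in Prod.mk x ⁻¹' s, f (x, y) ∂ν.condKernel x ∂ν.fst := by
      rw [← lintegral_indicator hs, Measure.lintegral_compProd (hf_meas.indicator hs)]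
      refine lintegral_congr fun x => ?_
      rw [← lintegral_indicator (measurable_prodMk_left hs)]
      refine lintegral_congr fun y => ?_
      by_cases hxy : (x, y) ∈ s
      · simp only [Set.indicator_of_mem hxy, Set.indicator_of_mem (Set.mem_preimage.mpr hxy)]
      · simp only [Set.indicator_of_notMem hxy,
          Set.indicator_of_notMem (fun h => hxy (Set.mem_preimage.mp h))]
    rw [hν_eq] at h1
    exact h1
  -- the marginal density
  have hfst : μ.fst = ν.fst.withDensity g := by
    ext s hs
    rw [Measure.fst_apply hs, ← hμν, withDensity_apply _ (measurable_fst hs),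
      withDensity_apply _ hs, hsliceint _ (measurable_fst hs)]
    have hind : ∀ x, ∫⁻ y in Prod.mk x ⁻¹' (Prod.fst ⁻¹' s), f (x, y) ∂ν.condKernel x
        = s.indicator g x := by
      intro x
      by_cases hx : x ∈ s
      · have h2 : (Prod.mk x ⁻¹' (Prod.fst ⁻¹' s) : Set Y) = Set.univ := by ext y; simp [hx]
        rw [h2, Measure.restrict_univ, Set.indicator_of_mem hx]
      · have h2 : (Prod.mk x ⁻¹' (Prod.fst ⁻¹' s) : Set Y) = ∅ := by ext y; simp [hx]
        rw [h2, Measure.restrict_empty, lintegral_zero_measure, Set.indicator_of_notMem hx]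
    simp_rw [hind]
    rw [lintegral_indicator hs]
  have hgint : ∫⁻ x, g x ∂ν.fst = 1 := by
    have h1 : ν.fst.withDensity g Set.univ = ∫⁻ x, g x ∂ν.fst := by
      rw [withDensity_apply _ MeasurableSet.univ, Measure.restrict_univ]
    rw [← hfst] at h1
    rw [← h1, measure_univ]
  have hgtop : ∀ᵐ x ∂ν.fst, g x < ⊤ := ae_lt_top hg_meas (by rw [hgint]; exact ENNReal.one_ne_top)
  -- conditional density and kernel
  set hden : X → Y → ℝ≥0∞ := fun x y => (g x)⁻¹ * f (x, y) with hden_def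
  have hden_meas : Measurable (Function.uncurry hden) :=
    ((hg_meas.comp measurable_fst).inv.mul hf_meas)
  have hdenx_meas : ∀ x, Measurable (hden x) :=
    fun x => (hf_meas.comp measurable_prodMk_left).const_mul _
  set κ : ProbabilityTheory.Kernel X Y := ProbabilityTheory.Kernel.withDensity ν.condKernel hden
    with hκ_def
  have hκ_apply : ∀ x, κ x = (ν.condKernel x).withDensity (hden x) :=
    fun x => ProbabilityTheory.Kernel.withDensity_apply _ hden_meas x
  have hκ_fin : IsFiniteKernel κ := by
    refine ⟨⟨1, ENNReal.one_lt_top, fun x => ?_⟩⟩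
    rw [hκ_apply, withDensity_apply _ MeasurableSet.univ, Measure.restrict_univ]
    have hmul : ∫⁻ y, hden x y ∂ν.condKernel x = (g x)⁻¹ * ∫⁻ y, f (x, y) ∂ν.condKernel x := by
      simp only [hden_def]
      exact lintegral_const_mul _
        (hf_meas.comp measurable_prodMk_left : Measurable fun y => f (x, y))
    rw [hmul]
    rw [show ∫⁻ y, f (x, y) ∂ν.condKernel x = g x from rfl]
    rcases eq_or_ne (g x) 0 with h | h
    · simp [h]
    rcases eq_or_ne (g x) ⊤ with h' | h'
    · simp [h']
    · rw [ENNReal.inv_mul_cancel h h']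
  -- μ disintegrates with κ
  have hcomp : μ = μ.fst ⊗ₘ κ := by
    ext s hs
    rw [Measure.compProd_apply hs]
    have hslice : ∀ x, κ x (Prod.mk x ⁻¹' s)
        = (g x)⁻¹ * ∫⁻ y in Prod.mk x ⁻¹' s, f (x, y) ∂ν.condKernel x := by
      intro x
      rw [hκ_apply, withDensity_apply _ (measurable_prodMk_left hs)]
      simp only [hden_def]
      exact lintegral_const_mul _
        (hf_meas.comp measurable_prodMk_left : Measurable fun y => f (x, y))
    have hκslice_meas : Measurable fun x => κ x (Prod.mk x ⁻¹' s) :=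
      ProbabilityTheory.Kernel.measurable_kernel_prodMk_left hs
    calc μ s = ∫⁻ z in s, f z ∂ν := by rw [← hμν, withDensity_apply _ hs]
      _ = ∫⁻ x, ∫⁻ y in Prod.mk x ⁻¹' s, f (x, y) ∂ν.condKernel x ∂ν.fst := hsliceint s hs
      _ = ∫⁻ x, g x * κ x (Prod.mk x ⁻¹' s) ∂ν.fst := by
          refine lintegral_congr_ae ?_
          filter_upwards [hgtop] with x hx
          rw [hslice]
          rcases eq_or_ne (g x) 0 with h | h
          · have hle : ∫⁻ y in Prod.mk x ⁻¹' s, f (x, y) ∂ν.condKernel x ≤ g x := by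
              rw [hg_def]
              exact setLIntegral_le_lintegral _ _
            have h0 : ∫⁻ y in Prod.mk x ⁻¹' s, f (x, y) ∂ν.condKernel x = 0 :=
              le_antisymm (h ▸ hle) zero_le
            rw [h0, h]
            simp
          · rw [← mul_assoc, ENNReal.mul_inv_cancel h hx.ne, one_mul]
      _ = ∫⁻ x, κ x (Prod.mk x ⁻¹' s) ∂μ.fst := by
          rw [hfst, lintegral_withDensity_eq_lintegral_mul _ hg_meas hκslice_meas]
          rfl
  -- identification of the conditional kernel of μ
  have hκμ : ∀ᵐ x ∂μ.fst, κ x = μ.condKernel x :=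
    eq_condKernel_of_measure_eq_compProd κ hcomp
  -- positivity facts
  have hgpos : ∀ᵐ x ∂μ.fst, g x ≠ 0 := by
    rw [ae_iff]
    simp only [not_not]
    have hms : MeasurableSet {x | g x = 0} := hg_meas (measurableSet_singleton 0)
    rw [hfst, withDensity_apply _ hms]
    calc ∫⁻ x in {x | g x = 0}, g x ∂ν.fst = ∫⁻ x in {x | g x = 0}, 0 ∂ν.fst := by
          refine setLIntegral_congr_fun hms (fun x hx => hx)
      _ = 0 := lintegral_zero
  have hgtop' : ∀ᵐ x ∂μ.fst, g x < ⊤ := hfst_ac.ae_le hgtop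
  -- real-valued logs
  set Lg : X → ℝ := fun x => Real.log (g x).toReal with hLg_def
  have hLg_meas : Measurable Lg := hg_meas.ennreal_toReal.log
  set Lh : X × Y → ℝ := fun z => Real.log (hden z.1 z.2).toReal with hLh_def
  have hLh_meas : Measurable Lh := by
    have : Measurable fun z : X × Y => hden z.1 z.2 := hden_meas
    exact this.ennreal_toReal.log
  -- conditional positive/negative parts
  set Cp : X → ℝ≥0∞ := fun x => ∫⁻ y, ENNReal.ofReal (Lh (x, y)) ∂μ.condKernel x with hCp_def
  set Cn : X → ℝ≥0∞ := fun x => ∫⁻ y, ENNReal.ofReal (-Lh (x, y)) ∂μ.condKernel x with hCn_def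
  have hCp_meas : Measurable Cp :=
    Measurable.lintegral_kernel_prod_right' hLh_meas.ennreal_ofReal
  have hCn_meas : Measurable Cn :=
    Measurable.lintegral_kernel_prod_right' hLh_meas.neg.ennreal_ofReal
  -- a.e. facts about conditional kernels
  have hcond : ∀ᵐ x ∂μ.fst,
      klDiv (μ.condKernel x) (ν.condKernel x) = Cp x - Cn x ∧ Cn x ≤ 1 ∧ Cn x ≤ Cp x := by
    filter_upwards [hκμ] with x hx
    have hwd : μ.condKernel x = (ν.condKernel x).withDensity (hden x) := by
      rw [← hx, hκ_apply]
    have hacx : μ.condKernel x ≪ ν.condKernel x := by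
      rw [hwd]; exact withDensity_absolutelyContinuous _ _
    have hrnx : (μ.condKernel x).rnDeriv (ν.condKernel x) =ᵐ[ν.condKernel x] hden x := by
      rw [hwd]
      exact Measure.rnDeriv_withDensity _ (hdenx_meas x)
    have hrnx' : (μ.condKernel x).rnDeriv (ν.condKernel x) =ᵐ[μ.condKernel x] hden x :=
      hacx.ae_le hrnx
    have hCpx : ∫⁻ y, ENNReal.ofReal
          (Real.log (((μ.condKernel x).rnDeriv (ν.condKernel x)) y).toReal) ∂μ.condKernel x
        = Cp x := by
      refine lintegral_congr_ae ?_
      filter_upwards [hrnx'] with y hy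
      rw [hy]
    have hCnx : ∫⁻ y, ENNReal.ofReal
          (-Real.log (((μ.condKernel x).rnDeriv (ν.condKernel x)) y).toReal) ∂μ.condKernel x
        = Cn x := by
      refine lintegral_congr_ae ?_
      filter_upwards [hrnx'] with y hy
      rw [hy]
    refine ⟨?_, ?_, ?_⟩
    · rw [klDiv_eq_sub _ _ hacx, hCpx, hCnx]
    · rw [← hCnx]; exact aux_neg_le_one _ _ hacx
    · rw [← hCnx, ← hCpx]; exact aux_neg_le_pos _ _ hacx
  -- marginal log identification
  have hrng : μ.fst.rnDeriv ν.fst =ᵐ[ν.fst] g := by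
    rw [hfst]
    exact Measure.rnDeriv_withDensity _ hg_meas
  have hrng' : μ.fst.rnDeriv ν.fst =ᵐ[μ.fst] g := hfst_ac.ae_le hrng
  -- global splitting of the log, a.e. μ
  have hfst_eq : μ.fst = μ.map Prod.fst := rfl
  have hg1 : ∀ᵐ z ∂μ, g (z.1 : X) ≠ 0 ∧ g z.1 < ⊤ := by
    have := ae_of_ae_map (measurable_fst.aemeasurable (μ := μ)) (hgpos.and hgtop')
    exact this
  have hsplit : ∀ᵐ z ∂μ, Real.log (f z).toReal = Lg z.1 + Lh z := by
    filter_upwards [aux_ae_pos_lt_top μ ν hac, hg1] with z ⟨hf0, hftop⟩ ⟨hg0, hgt⟩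
    have hfz : f z = g z.1 * hden z.1 z.2 := by
      rw [hden_def, ← mul_assoc, ENNReal.mul_inv_cancel hg0 hgt.ne, one_mul]
    have hgpos' : 0 < (g z.1).toReal := ENNReal.toReal_pos hg0 hgt.ne
    have hdent : (hden z.1 z.2).toReal = (f z).toReal / (g z.1).toReal := by
      rw [hden_def, ENNReal.toReal_mul, ENNReal.toReal_inv]
      ring
    have hdpos : 0 < (hden z.1 z.2).toReal := by
      rw [hdent]
      exact div_pos (ENNReal.toReal_pos hf0.ne' hftop.ne) hgpos'
    rw [hfz, ENNReal.toReal_mul, Real.log_mul hgpos'.ne' hdpos.ne']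
  -- assemble all lintegrals
  set P1 := ∫⁻ z, ENNReal.ofReal (Real.log (f z).toReal) ∂μ with hP1_def
  set N1 := ∫⁻ z, ENNReal.ofReal (-Real.log (f z).toReal) ∂μ with hN1_def
  set P2 := ∫⁻ x, ENNReal.ofReal (Lg x) ∂μ.fst with hP2_def
  set N2 := ∫⁻ x, ENNReal.ofReal (-Lg x) ∂μ.fst with hN2_def
  set P3 := ∫⁻ x, Cp x ∂μ.fst with hP3_def
  set N3 := ∫⁻ x, Cn x ∂μ.fst with hN3_def
  set P1' := ∫⁻ z : X × Y, ENNReal.ofReal (Lg z.1 + Lh z) ∂μ with hP1'_def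
  set N1' := ∫⁻ z : X × Y, ENNReal.ofReal (-(Lg z.1 + Lh z)) ∂μ with hN1'_def
  -- identification of the marginal terms
  have hP2eq : ∫⁻ x, ENNReal.ofReal (Real.log (μ.fst.rnDeriv ν.fst x).toReal) ∂μ.fst = P2 := by
    refine lintegral_congr_ae ?_
    filter_upwards [hrng'] with x hx
    rw [hLg_def, hx]
  have hN2eq : ∫⁻ x, ENNReal.ofReal (-Real.log (μ.fst.rnDeriv ν.fst x).toReal) ∂μ.fst = N2 := by
    refine lintegral_congr_ae ?_
    filter_upwards [hrng'] with x hx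
    rw [hLg_def, hx]
  have hklfst : klDiv μ.fst ν.fst = P2 - N2 := by
    rw [klDiv_eq_sub _ _ hfst_ac, hP2eq, hN2eq]
  -- identification of the original measure terms
  have hP1eq : P1 = P1' := by
    refine lintegral_congr_ae ?_
    filter_upwards [hsplit] with z hz
    rw [hz]
  have hN1eq : N1 = N1' := by
    refine lintegral_congr_ae ?_
    filter_upwards [hsplit] with z hz
    rw [hz]
  have hkl : klDiv μ ν = P1 - N1 := klDiv_eq_sub μ ν hac
  -- the conditional term
  have hN3le1 : N3 ≤ 1 := by
    calc N3 ≤ ∫⁻ _, 1 ∂μ.fst := lintegral_mono_ae (by filter_upwards [hcond] with x hx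
            using hx.2.1)
      _ = 1 := by simp
  have hN3leP3 : N3 ≤ P3 := lintegral_mono_ae (by filter_upwards [hcond] with x hx using hx.2.2)
  have hcondint : ∫⁻ x, klDiv (μ.condKernel x) (ν.condKernel x) ∂μ.fst = P3 - N3 := by
    rw [lintegral_congr_ae (g := fun x => Cp x - Cn x)
      (by filter_upwards [hcond] with x hx using hx.1)]
    exact lintegral_sub hCn_meas (by rw [← hN3_def]; exact (hN3le1.trans_lt ENNReal.one_lt_top).ne)
      (by filter_upwards [hcond] with x hx using hx.2.2)
  -- transport of the marginal integrals to μ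
  have hP2' : P2 = ∫⁻ z : X × Y, ENNReal.ofReal (Lg z.1) ∂μ := by
    rw [hP2_def, hfst_eq, lintegral_map hLg_meas.ennreal_ofReal measurable_fst]
  have hN2' : N2 = ∫⁻ z : X × Y, ENNReal.ofReal (-Lg z.1) ∂μ := by
    rw [hN2_def, hfst_eq, lintegral_map (f := fun x => ENNReal.ofReal (-Lg x)) hLg_meas.neg.ennreal_ofReal measurable_fst]
  have hP3' : P3 = ∫⁻ z : X × Y, ENNReal.ofReal (Lh z) ∂μ := by
    have h := Measure.lintegral_compProd (μ := μ.fst) (κ := μ.condKernel)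
      hLh_meas.ennreal_ofReal
    rw [hμ_eq] at h
    rw [hP3_def]
    exact h.symm
  have hN3' : N3 = ∫⁻ z : X × Y, ENNReal.ofReal (-Lh z) ∂μ := by
    have h := Measure.lintegral_compProd (μ := μ.fst) (κ := μ.condKernel)
      hLh_meas.neg.ennreal_ofReal
    rw [hμ_eq] at h
    rw [hN3_def]
    exact h.symm
  -- the master identity
  have hE : P1' + (N2 + N3) = N1' + (P2 + P3) := by
    have hm1 : Measurable fun z : X × Y => Lg z.1 + Lh z :=
      (hLg_meas.comp measurable_fst).add hLh_meas
    have hm2 : Measurable fun z : X × Y => Lg z.1 := hLg_meas.comp measurable_fst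
    calc P1' + (N2 + N3)
        = ∫⁻ z : X × Y, (ENNReal.ofReal (Lg z.1 + Lh z)
            + (ENNReal.ofReal (-Lg z.1) + ENNReal.ofReal (-Lh z))) ∂μ := by
          rw [hN2', hN3', ← lintegral_add_left (f := fun z : X × Y => ENNReal.ofReal (-Lg z.1)) hm2.neg.ennreal_ofReal,
            ← lintegral_add_left hm1.ennreal_ofReal]
      _ = ∫⁻ z : X × Y, (ENNReal.ofReal (-(Lg z.1 + Lh z))
            + (ENNReal.ofReal (Lg z.1) + ENNReal.ofReal (Lh z))) ∂μ :=
          lintegral_congr fun z => aux_ofReal_add_identity _ _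
      _ = N1' + (P2 + P3) := by
          rw [hP2', hP3', ← lintegral_add_left hm2.ennreal_ofReal,
            ← lintegral_add_left (f := fun z : X × Y => ENNReal.ofReal (-(Lg z.1 + Lh z))) hm1.neg.ennreal_ofReal]
  -- finiteness and order facts
  have hN1le1 : N1 ≤ 1 := aux_neg_le_one μ ν hac
  have hN1leP1 : N1 ≤ P1 := aux_neg_le_pos μ ν hac
  have hN2le1 : N2 ≤ 1 := by rw [← hN2eq]; exact aux_neg_le_one _ _ hfst_ac
  have hN2leP2 : N2 ≤ P2 := by rw [← hN2eq, ← hP2eq]; exact aux_neg_le_pos _ _ hfst_ac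
  have hN1top : N1' ≠ ⊤ := by
    rw [← hN1eq]; exact (hN1le1.trans_lt ENNReal.one_lt_top).ne
  have hN2top : N2 ≠ ⊤ := (hN2le1.trans_lt ENNReal.one_lt_top).ne
  have hN3top : N3 ≠ ⊤ := (hN3le1.trans_lt ENNReal.one_lt_top).ne
  -- conclusion
  rw [hkl, hklfst, hcondint, hP1eq, hN1eq]
  rw [show (P2 - N2) + (P3 - N3) = (P2 + P3) - (N2 + N3) from
    (aux_sub_add_sub hN2top hN3top hN2leP2 hN3leP3).symm]
  exact aux_sub_eq_sub hE hN1top (ENNReal.add_ne_top.mpr ⟨hN2top, hN3top⟩)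
    (by rw [← hP1eq, ← hN1eq]; exact hN1leP1) (add_le_add hN2leP2 hN3leP3)
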